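/- Let g be a Gaussian analytic function on the unit disk 𝔻 with sup_{z∈𝔻} E[|g(z)|²] ≤ σ². Then there exist universal constants c, C > 0 such that for every λ > 0, P[ max_{|z| ≤ 1/2} |g(z)| > λσ ] ≤ C e^{−cλ²}. -/

import Mathlib

open MeasureTheory Real ProbabilityTheory

lemma aux_one_div_le_exp {x : ℝ} (h0 : 0 ≤ x) (h1 : x ≤ 1/2) :
    1 / (1 - x) ≤ Real.exp (2 * x) := by
  have h2 : 1 / (1 - x) ≤ 1 + 2 * x := by
    rw [div_le_iff₀ (by linarith)]
    nlinarith
  calc 1 / (1 - x) ≤ 1 + 2*x := h2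
    _ ≤ Real.exp (2*x) := by linarith [Real.add_one_le_exp (2*x)]

lemma aux_gauss_int {b : ℝ} (hb1 : b < 1) :
    ∫⁻ z : ℂ, ENNReal.ofReal ((1/π) * Real.exp (-((1-b) * ‖z‖^2))) = ENNReal.ofReal (1/(1-b)) := by
  have hpos : (0:ℝ) < 1 - b := by linarith
  have hint : Integrable (fun v : ℂ => rexp (-(1-b) * ‖v‖^2)) := by
    have h := (GaussianFourier.integrable_cexp_neg_mul_sq_norm_add
      (b := ((1-b:ℝ):ℂ)) (by simp [hpos]) 0 (0:ℂ)).norm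
    convert h using 2 with v
    simp [Complex.norm_exp, ← Complex.ofReal_pow]
  have hint2 : Integrable (fun v : ℂ => (1/π) * rexp (-(1-b) * ‖v‖^2)) := hint.const_mul _
  rw [← MeasureTheory.ofReal_integral_eq_lintegral_ofReal]
  · congr 1
    simp_rw [MeasureTheory.integral_const_mul, neg_mul_eq_neg_mul]
    rw [GaussianFourier.integral_rexp_neg_mul_sq_norm hpos, Complex.finrank_real_complex]
    rw [show ((2:ℕ)/2 : ℝ) = 1 by norm_num, Real.rpow_one]
    field_simp
  · convert hint2 using 2 with v; ring_nf
  · filter_upwards with v; positivity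

lemma aux_factor {Ω : Type} [MeasurableSpace Ω] (P : Measure Ω) (ξ0 : Ω → ℂ)
    (hm : Measurable ξ0)
    (hmap : Measure.map ξ0 P
      = volume.withDensity (fun z : ℂ => ENNReal.ofReal ((1 / π) * Real.exp (-‖z‖ ^ 2))))
    {b : ℝ} (hb0 : 0 ≤ b) (hb1 : b ≤ 1/2) :
    ∫⁻ ω, ENNReal.ofReal (Real.exp (b * ‖ξ0 ω‖^2)) ∂P ≤ ENNReal.ofReal (Real.exp (2*b)) := by
  have hfm : Measurable fun z : ℂ => ENNReal.ofReal (Real.exp (b*‖z‖^2)) :=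
    ENNReal.measurable_ofReal.comp
      (Real.measurable_exp.comp ((measurable_norm.pow_const 2).const_mul b))
  have hdm : Measurable fun z : ℂ => ENNReal.ofReal ((1 / π) * Real.exp (-‖z‖ ^ 2)) :=
    ENNReal.measurable_ofReal.comp
      ((Real.measurable_exp.comp (measurable_norm.pow_const 2).neg).const_mul _)
  calc ∫⁻ ω, ENNReal.ofReal (Real.exp (b * ‖ξ0 ω‖^2)) ∂P
      = ∫⁻ z, ENNReal.ofReal (Real.exp (b * ‖z‖^2)) ∂(Measure.map ξ0 P) :=
        (lintegral_map hfm hm).symm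
    _ = ∫⁻ z : ℂ, (ENNReal.ofReal ((1 / π) * Real.exp (-‖z‖ ^ 2))
          * ENNReal.ofReal (Real.exp (b * ‖z‖^2))) := by
        rw [hmap, lintegral_withDensity_eq_lintegral_mul volume hdm hfm]
        rfl
    _ = ∫⁻ z : ℂ, ENNReal.ofReal ((1/π) * Real.exp (-((1-b) * ‖z‖^2))) := by
        congr 1 with z
        rw [← ENNReal.ofReal_mul (by positivity)]
        congr 1
        rw [mul_assoc, ← Real.exp_add]
        ring_nf
    _ = ENNReal.ofReal (1/(1-b)) := aux_gauss_int (by linarith)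
    _ ≤ ENNReal.ofReal (Real.exp (2*b)) := ENNReal.ofReal_le_ofReal (aux_one_div_le_exp hb0 hb1)

lemma aux_prod_lintegral {Ω : Type} [MeasurableSpace Ω] (P : Measure Ω)
    [IsProbabilityMeasure P] (F : ℕ → Ω → ENNReal)
    (hInd : iIndepFun F P) (hm : ∀ n, Measurable (F n)) (N : ℕ) :
    ∫⁻ ω, ∏ n ∈ Finset.range N, F n ω ∂P = ∏ n ∈ Finset.range N, ∫⁻ ω, F n ω ∂P := by
  induction N with
  | zero => simp
  | succ N ih =>
    simp_rw [Finset.prod_range_succ]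
    rw [← ih]
    have hI : IndepFun (∏ j ∈ Finset.range N, F j) (F N) P :=
      hInd.indepFun_prod_range_succ hm N
    have := lintegral_mul_eq_lintegral_mul_lintegral_of_indepFun
      (μ := P) (f := ∏ j ∈ Finset.range N, F j) (g := F N)
      (by rw [Finset.prod_fn]; exact Finset.measurable_prod _ (fun i _ => hm i)) (hm N) hI
    simp only [Pi.mul_apply, Finset.prod_apply] at this ⊢
    rw [← this]

lemma aux_sup_exp {Z : ℕ → ℝ} {L : ℝ} (hL : 0 < L)
    (h : ENNReal.ofReal L ≤ ⨆ N, ENNReal.ofReal (Z N)) :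
    ENNReal.ofReal (Real.exp (L/2)) ≤ ⨆ N, ENNReal.ofReal (Real.exp (Z N / 2)) := by
  by_contra hc
  push_neg at hc
  set b := ⨆ N, ENNReal.ofReal (Real.exp (Z N / 2)) with hb
  have hbt : b ≠ ⊤ := hc.ne_top
  have htb : b.toReal < Real.exp (L/2) := by
    rw [← ENNReal.ofReal_lt_ofReal_iff_of_nonneg ENNReal.toReal_nonneg,
      ENNReal.ofReal_toReal hbt]
    exact hc
  set E := Real.exp (L/2) with hE
  set w := (b.toReal + E)/2 with hw
  have hw0 : 0 < w := by positivity
  have hwE : w < E := by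
    have := ENNReal.toReal_nonneg (a := b); linarith
  have hbw : b.toReal < w := by linarith
  have hrL : 2 * Real.log w < L := by
    have : Real.log w < Real.log E := Real.log_lt_log hw0 hwE
    rw [hE, Real.log_exp] at this; linarith
  have h1 : ENNReal.ofReal (2 * Real.log w) < ⨆ N, ENNReal.ofReal (Z N) :=
    lt_of_lt_of_le ((ENNReal.ofReal_lt_ofReal_iff hL).2 hrL) h
  obtain ⟨N, hN⟩ := lt_iSup_iff.1 h1
  have hrZ : 2 * Real.log w < Z N := by
    by_contra hle
    push_neg at hle
    exact absurd (ENNReal.ofReal_le_ofReal hle) (not_le.2 hN)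
  have hwZ : w ≤ Real.exp (Z N / 2) := by
    calc w = Real.exp (Real.log w) := (Real.exp_log hw0).symm
      _ ≤ Real.exp (Z N / 2) := Real.exp_le_exp.2 (by linarith)
  have h2 : ENNReal.ofReal w ≤ b := le_trans (ENNReal.ofReal_le_ofReal hwZ)
    (le_iSup (fun N => ENNReal.ofReal (Real.exp (Z N / 2))) N)
  have : w ≤ b.toReal := (ENNReal.ofReal_le_iff_le_toReal hbt).1 h2
  linarith

lemma aux_key_real {a c p s lam σ : ℝ} (ha : 0 ≤ a) (hc : 0 ≤ c) (hp : 0 ≤ p) (hs : 0 ≤ s)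
    (hσ : 0 < σ) (hlam : 0 < lam) :
    a*c*(p*s) ≤ lam/(2*σ)*(c^2*p^2) + σ/(2*lam)*(s^2*a^2) := by
  rw [div_mul_eq_mul_div, div_mul_eq_mul_div,
    div_add_div _ _ (by positivity) (by positivity), le_div_iff₀ (by positivity)]
  nlinarith [sq_nonneg (lam*(c*p) - σ*(a*s)), mul_pos hσ hlam, sq_nonneg (c*p), sq_nonneg (a*s)]

lemma aux_pointwise {coef : ℕ → ℂ} {σ lam : ℝ} (hσ : 0 < σ) (hlam : 0 < lam)
    (hsum34 : Summable (fun n => ‖coef n‖^2 * (3/4:ℝ)^(2*n)))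
    (hb34 : (∑' n, ‖coef n‖^2 * (3/4:ℝ)^(2*n)) ≤ σ^2)
    (x : ℕ → ℂ) (z : ℂ) (hz : ‖z‖ ≤ 1/2)
    (hlt : lam * σ < ‖∑' n, x n * coef n * z^n‖) :
    ENNReal.ofReal (lam^2) ≤ ∑' n, ENNReal.ofReal ((4/9:ℝ)^n * ‖x n‖^2) := by
  set u : ℕ → ℂ := fun n => x n * coef n * z^n with hu
  by_cases hsummable : Summable u
  swap
  · rw [tsum_eq_zero_of_not_summable hsummable] at hlt
    simp only [norm_zero] at hlt
    nlinarith
  have hnorm : Summable (fun n => ‖u n‖) := hsummable.norm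
  have h1 : lam * σ ≤ ∑' n, ‖u n‖ := le_trans hlt.le (norm_tsum_le_tsum_norm hnorm)
  set A : ℕ → ℝ := fun n => lam/(2*σ) * (‖coef n‖^2 * (3/4:ℝ)^(2*n)) with hA
  set B : ℕ → ℝ := fun n => σ/(2*lam) * ((4/9:ℝ)^n * ‖x n‖^2) with hB
  have hterm : ∀ n, ‖u n‖ ≤ A n + B n := by
    intro n
    have h2 : ‖u n‖ = ‖x n‖ * ‖coef n‖ * ‖z‖^n := by
      simp [hu, norm_mul, norm_pow, mul_comm]
    have h3 : ‖z‖^n ≤ (1/2:ℝ)^n := pow_le_pow_left₀ (norm_nonneg z) hz n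
    have h4 : ((1:ℝ)/2)^n = (3/4:ℝ)^n * (2/3:ℝ)^n := by
      rw [← mul_pow]; norm_num
    have h5 : ((3:ℝ)/4)^(2*n) = ((3/4:ℝ)^n)^2 := by rw [pow_mul']
    have h6 : ((4:ℝ)/9)^n = ((2/3:ℝ)^n)^2 := by rw [← pow_mul, pow_mul']; norm_num
    have key := aux_key_real (norm_nonneg (x n)) (norm_nonneg (coef n))
      (pow_nonneg (by norm_num) n : (0:ℝ) ≤ (3/4:ℝ)^n)
      (pow_nonneg (by norm_num) n : (0:ℝ) ≤ (2/3:ℝ)^n) hσ hlam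
    calc ‖u n‖ = ‖x n‖ * ‖coef n‖ * ‖z‖^n := h2
      _ ≤ ‖x n‖ * ‖coef n‖ * ((3/4:ℝ)^n * (2/3:ℝ)^n) := by
          rw [← h4]
          exact mul_le_mul_of_nonneg_left h3 (by positivity)
      _ ≤ A n + B n := by simp only [hA, hB, h5, h6]; exact key
  have e1 : ENNReal.ofReal (lam * σ) ≤ ∑' n, ENNReal.ofReal ‖u n‖ := by
    rw [← ENNReal.ofReal_tsum_of_nonneg (fun n => norm_nonneg _) hnorm]
    exact ENNReal.ofReal_le_ofReal h1
  have e2 : (∑' n, ENNReal.ofReal ‖u n‖)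
      ≤ (∑' n, ENNReal.ofReal (A n)) + ∑' n, ENNReal.ofReal (B n) := by
    rw [← ENNReal.tsum_add]
    exact ENNReal.tsum_le_tsum fun n => le_trans (ENNReal.ofReal_le_ofReal (hterm n))
      ENNReal.ofReal_add_le
  have e3 : (∑' n, ENNReal.ofReal (A n)) ≤ ENNReal.ofReal (lam * σ / 2) := by
    rw [← ENNReal.ofReal_tsum_of_nonneg (fun n => by positivity) (hsum34.mul_left _)]
    apply ENNReal.ofReal_le_ofReal
    rw [tsum_mul_left]
    calc lam/(2*σ) * (∑' n, ‖coef n‖^2 * (3/4:ℝ)^(2*n)) ≤ lam/(2*σ) * σ^2 :=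
          mul_le_mul_of_nonneg_left hb34 (by positivity)
      _ = lam * σ / 2 := by field_simp
  have e4 : (∑' n, ENNReal.ofReal (B n))
      = ENNReal.ofReal (σ/(2*lam)) * ∑' n, ENNReal.ofReal ((4/9:ℝ)^n * ‖x n‖^2) := by
    rw [← ENNReal.tsum_mul_left]
    congr 1 with n
    rw [ENNReal.ofReal_mul (by positivity)]
  set Z := ∑' n, ENNReal.ofReal ((4/9:ℝ)^n * ‖x n‖^2) with hZ
  have e5 : ENNReal.ofReal (lam * σ / 2) + ENNReal.ofReal (lam * σ / 2)
      ≤ ENNReal.ofReal (lam * σ / 2) + ENNReal.ofReal (σ/(2*lam)) * Z := by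
    calc ENNReal.ofReal (lam * σ / 2) + ENNReal.ofReal (lam * σ / 2)
        = ENNReal.ofReal (lam * σ) := by
          rw [← ENNReal.ofReal_add (by positivity) (by positivity)]; ring_nf
      _ ≤ (∑' n, ENNReal.ofReal (A n)) + ∑' n, ENNReal.ofReal (B n) := le_trans e1 e2
      _ ≤ ENNReal.ofReal (lam * σ / 2) + ENNReal.ofReal (σ/(2*lam)) * Z := by
          rw [e4]; exact add_le_add_left e3 _
  have e6 : ENNReal.ofReal (lam * σ / 2) ≤ ENNReal.ofReal (σ/(2*lam)) * Z :=
    (ENNReal.add_le_add_iff_left ENNReal.ofReal_ne_top).1 e5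
  have e7 : ENNReal.ofReal (lam * σ / 2)
      = ENNReal.ofReal (σ/(2*lam)) * ENNReal.ofReal (lam^2) := by
    rw [← ENNReal.ofReal_mul (by positivity)]
    congr 1
    field_simp
  rw [e7] at e6
  exact (ENNReal.mul_le_mul_iff_right (by simp [ENNReal.ofReal_eq_zero]; positivity)
    ENNReal.ofReal_ne_top).1 e6

lemma aux_prod_ofReal_exp (s : Finset ℕ) (g : ℕ → ℝ) :
    ∏ n ∈ s, ENNReal.ofReal (Real.exp (g n)) = ENNReal.ofReal (Real.exp (∑ n ∈ s, g n)) := by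
  classical
  induction s using Finset.induction_on with
  | empty => simp
  | insert _ _ hnotmem ih =>
    rw [Finset.prod_insert hnotmem, Finset.sum_insert hnotmem, ih, Real.exp_add,
      ENNReal.ofReal_mul (Real.exp_nonneg _)]

theorem hole_prob_stmt_17 :
    ∃ c > (0 : ℝ), ∃ C > (0 : ℝ),
      ∀ (Ω : Type) (_ : MeasurableSpace Ω) (P : Measure Ω) (_ : IsProbabilityMeasure P)
        (ξ : ℕ → Ω → ℂ), (∀ n, Measurable (ξ n)) →
        iIndepFun ξ P →
        (∀ n, Measure.map (ξ n) P
          = volume.withDensity (fun z : ℂ => ENNReal.ofReal ((1 / π) * Real.exp (-‖z‖ ^ 2)))) →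
        ∀ (coef : ℕ → ℂ),
        (∀ r : ℝ, 0 ≤ r → r < 1 → Summable (fun n : ℕ => ‖coef n‖ ^ 2 * r ^ (2 * n))) →
        ∀ (σ : ℝ), 0 < σ →
        (∀ z : ℂ, ‖z‖ < 1 → (∑' n : ℕ, ‖coef n‖ ^ 2 * ‖z‖ ^ (2 * n)) ≤ σ ^ 2) →
        ∀ (lam : ℝ), 0 < lam →
        P {ω | ∃ z : ℂ, ‖z‖ ≤ 1 / 2 ∧ lam * σ < ‖∑' n : ℕ, ξ n ω * coef n * z ^ n‖}
          ≤ ENNReal.ofReal (C * Real.exp (-c * lam ^ 2)) := by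
  refine ⟨1/2, by norm_num, Real.exp 2, Real.exp_pos 2, ?_⟩
  intro Ω mΩ P hP ξ hξm hξind hξmap coef hsumm σ hσ hbound lam hlam
  set q : ℕ → Ω → ℝ := fun n ω => (4/9:ℝ)^n * ‖ξ n ω‖^2 with hq
  set f : ℕ → Ω → ENNReal := fun n ω => ENNReal.ofReal (Real.exp (q n ω / 2)) with hf
  set F : ℕ → Ω → ENNReal := fun N ω => ∏ n ∈ Finset.range N, f n ω with hF
  set G : Ω → ENNReal := fun ω => ⨆ N, F N ω with hG
  have hqm : ∀ n, Measurable (q n) := fun n => (((hξm n).norm.pow_const 2).const_mul _)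
  have hfm : ∀ n, Measurable (f n) := fun n =>
    ENNReal.measurable_ofReal.comp (Real.measurable_exp.comp ((hqm n).div_const 2))
  have hFm : ∀ N, Measurable (F N) := fun N => Finset.measurable_prod _ (fun i _ => hfm i)
  have hGm : Measurable G := Measurable.iSup hFm
  have hFS : ∀ N ω, F N ω = ENNReal.ofReal (Real.exp ((∑ n ∈ Finset.range N, q n ω)/2)) := by
    intro N ω
    rw [hF]
    simp only
    rw [aux_prod_ofReal_exp (Finset.range N) (fun n => q n ω / 2), ← Finset.sum_div]
  have hFmono : Monotone F := by
    intro N M hNM ω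
    rw [hFS, hFS]
    apply ENNReal.ofReal_le_ofReal
    apply Real.exp_le_exp.2
    have hss := Finset.sum_le_sum_of_subset_of_nonneg (f := fun n => q n ω)
      (Finset.range_subset_range.2 hNM) (fun i _ _ => by positivity)
    linarith
  -- hypothesis at z = 3/4
  have hsum34 : Summable (fun n => ‖coef n‖^2 * (3/4:ℝ)^(2*n)) :=
    hsumm (3/4) (by norm_num) (by norm_num)
  have hz34 : ‖((3/4:ℝ) : ℂ)‖ = (3/4:ℝ) := by
    rw [Complex.norm_real]; norm_num
  have hb34 : (∑' n, ‖coef n‖^2 * (3/4:ℝ)^(2*n)) ≤ σ^2 := by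
    have := hbound ((3/4:ℝ) : ℂ) (by rw [hz34]; norm_num)
    rwa [hz34] at this
  -- containment
  have hsubset : {ω | ∃ z : ℂ, ‖z‖ ≤ 1 / 2 ∧ lam * σ < ‖∑' n : ℕ, ξ n ω * coef n * z ^ n‖}
      ⊆ {ω | ENNReal.ofReal (Real.exp (lam^2/2)) ≤ G ω} := by
    rintro ω ⟨z, hz, hlt⟩
    have hZ := aux_pointwise hσ hlam hsum34 hb34 (fun n => ξ n ω) z hz hlt
    have hZsup : (∑' n, ENNReal.ofReal ((4/9:ℝ)^n * ‖ξ n ω‖^2))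
        = ⨆ N, ENNReal.ofReal (∑ n ∈ Finset.range N, q n ω) := by
      rw [ENNReal.tsum_eq_iSup_nat]
      congr 1 with N
      rw [ENNReal.ofReal_sum_of_nonneg (fun i _ => by positivity)]
    rw [hZsup] at hZ
    have hfin := aux_sup_exp (by positivity : (0:ℝ) < lam^2) hZ
    calc ENNReal.ofReal (Real.exp (lam^2/2))
        ≤ ⨆ N, ENNReal.ofReal (Real.exp ((∑ n ∈ Finset.range N, q n ω) / 2)) := hfin
      _ = G ω := iSup_congr fun N => (hFS N ω).symm
  -- independence of the f n
  have hindf : iIndepFun f P := by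
    have := hξind.comp
      (fun n (z : ℂ) => ENNReal.ofReal (Real.exp ((4/9:ℝ)^n * ‖z‖^2 / 2)))
      (fun n => ENNReal.measurable_ofReal.comp
        (Real.measurable_exp.comp (((measurable_norm.pow_const 2).const_mul _).div_const 2)))
    exact this
  -- integral bound
  have hFint : ∀ N, ∫⁻ ω, F N ω ∂P ≤ ENNReal.ofReal (Real.exp 2) := by
    intro N
    have h1 : ∫⁻ ω, F N ω ∂P = ∏ n ∈ Finset.range N, ∫⁻ ω, f n ω ∂P :=
      aux_prod_lintegral P f hindf hfm N
    have h2 : ∀ n, ∫⁻ ω, f n ω ∂P ≤ ENNReal.ofReal (Real.exp ((4/9:ℝ)^n)) := by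
      intro n
      have heq : (fun ω => f n ω)
          = fun ω => ENNReal.ofReal (Real.exp (((1/2) * (4/9:ℝ)^n) * ‖ξ n ω‖^2)) := by
        funext ω
        simp only [hf, hq]
        congr 2
        ring
      have hb0 : (0:ℝ) ≤ (1/2) * (4/9:ℝ)^n := by positivity
      have hb1 : (1/2) * (4/9:ℝ)^n ≤ 1/2 := by
        have : (4/9:ℝ)^n ≤ 1 := pow_le_one₀ (by norm_num) (by norm_num)
        nlinarith
      have hfac := aux_factor P (ξ n) (hξm n) (hξmap n) hb0 hb1
      have h49 : 2*((1/2) * (4/9:ℝ)^n) = (4/9:ℝ)^n := by ring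
      rw [h49] at hfac
      rw [heq]
      exact hfac
    calc ∫⁻ ω, F N ω ∂P = ∏ n ∈ Finset.range N, ∫⁻ ω, f n ω ∂P := h1
      _ ≤ ∏ n ∈ Finset.range N, ENNReal.ofReal (Real.exp ((4/9:ℝ)^n)) :=
          Finset.prod_le_prod' fun n _ => h2 n
      _ = ENNReal.ofReal (Real.exp (∑ n ∈ Finset.range N, (4/9:ℝ)^n)) :=
          aux_prod_ofReal_exp _ _
      _ ≤ ENNReal.ofReal (Real.exp 2) := by
          apply ENNReal.ofReal_le_ofReal
          apply Real.exp_le_exp.2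
          calc (∑ n ∈ Finset.range N, (4/9:ℝ)^n) ≤ ∑' n, (4/9:ℝ)^n :=
                (summable_geometric_of_lt_one (by norm_num) (by norm_num)).sum_le_tsum _
                  (fun i _ => by positivity)
            _ = (1 - 4/9)⁻¹ := tsum_geometric_of_lt_one (by norm_num) (by norm_num)
            _ ≤ 2 := by norm_num
  have hGint : ∫⁻ ω, G ω ∂P ≤ ENNReal.ofReal (Real.exp 2) := by
    rw [hG]
    rw [lintegral_iSup hFm hFmono]
    exact iSup_le hFint
  -- Markov
  have hE0 : ENNReal.ofReal (Real.exp (lam^2/2)) ≠ 0 :=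
    ne_of_gt (ENNReal.ofReal_pos.2 (Real.exp_pos _))
  have hmarkov := meas_ge_le_lintegral_div (μ := P) hGm.aemeasurable hE0 ENNReal.ofReal_ne_top
  calc P {ω | ∃ z : ℂ, ‖z‖ ≤ 1 / 2 ∧ lam * σ < ‖∑' n : ℕ, ξ n ω * coef n * z ^ n‖}
      ≤ P {ω | ENNReal.ofReal (Real.exp (lam^2/2)) ≤ G ω} := measure_mono hsubset
    _ ≤ (∫⁻ ω, G ω ∂P) / ENNReal.ofReal (Real.exp (lam^2/2)) := hmarkov
    _ ≤ ENNReal.ofReal (Real.exp 2) / ENNReal.ofReal (Real.exp (lam^2/2)) :=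
        ENNReal.div_le_div_right hGint _
    _ = ENNReal.ofReal (Real.exp 2 * Real.exp (-(1/2) * lam ^ 2)) := by
        rw [← ENNReal.ofReal_div_of_pos (Real.exp_pos _)]
        congr 1
        rw [← Real.exp_sub, ← Real.exp_add]
        congr 1
        ring
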